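/- Let q be a bivariate polynomial and e a subset of its zero set such that ∇q(x) ≠ 0 for all x ∈ e. Write q in BB-form of degree 2 with respect to a triangle ⟨v_1,v_2,v_3⟩ with q(v_2)=q(v_3)=0, coefficients q_{200}=q(v_1), q_{110}, q_{101}, q_{011}, q_{020}=0, q_{002}=0. If v_3 ∈ e, then q_{101} ≠ 0. -/
import Mathlib


open MvPolynomial Finset

private lemma affine_rep (p : MvPolynomial (Fin 2) ℝ) (h : p.totalDegree ≤ 1) :
    p = C (coeff 0 p) + C (coeff (Finsupp.single 0 1) p) * X 0
      + C (coeff (Finsupp.single 1 1) p) * X 1 := by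
  apply MvPolynomial.ext
  intro m
  have hm : m = Finsupp.single 0 (m 0) + Finsupp.single 1 (m 1) := by
    ext i; fin_cases i <;> simp
  rcases Nat.lt_or_ge (m 0 + m 1) 2 with h2 | h2
  · have hc : (m 0 = 0 ∧ m 1 = 0) ∨ (m 0 = 1 ∧ m 1 = 0) ∨ (m 0 = 0 ∧ m 1 = 1) := by omega
    rcases hc with ⟨h0, h1⟩ | ⟨h0, h1⟩ | ⟨h0, h1⟩ <;> rw [h0, h1] at hm <;>
      simp at hm <;> subst hm <;>
      simp [coeff_C_mul, coeff_X', coeff_C, Finsupp.single_eq_single_iff,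
        Finsupp.single_eq_zero, eq_comm]
  · have hz : coeff m p = 0 := by
      apply coeff_eq_zero_of_totalDegree_lt
      have : ∑ i ∈ m.support, m i = m 0 + m 1 := by
        rw [Finset.sum_subset (Finset.subset_univ _) (by simp), Fin.sum_univ_two]
      omega
    rw [hz]
    have h0 : m ≠ 0 := by
      intro hme; rw [hme] at h2; simp at h2
    have hs0 : m ≠ Finsupp.single 0 1 := by
      intro hme; rw [hme] at h2; simp at h2
    have hs1 : m ≠ Finsupp.single 1 1 := by
      intro hme; rw [hme] at h2; simp at h2
    simp [coeff_C_mul, coeff_X', coeff_C, h0, hs0, hs1, h0.symm, hs0.symm, hs1.symm]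

private lemma affine_eval (p : MvPolynomial (Fin 2) ℝ) (h : p.totalDegree ≤ 1)
    (x y : Fin 2 → ℝ) :
    eval x p = eval y p + ∑ i, (x i - y i) * eval y (pderiv i p) := by
  rw [affine_rep p h]
  simp [pderiv_mul, Fin.sum_univ_two, Finsupp.single_eq_single_iff]
  ring


/-- Let `q` be a quadratic polynomial, written in degree-2 BB-form with respect
to a triangle `⟨v₁,v₂,v₃⟩` with `q(v₂) = q(v₃) = 0` (coefficients
`q₂₀₀ = q(v₁), q₁₁₀, q₁₀₁, q₀₁₁, q₀₂₀ = q₀₀₂ = 0`), and let `e` be a subset of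
its zero set with `∇q(x) ≠ 0` for all `x ∈ e`, passing through `v₃` with a
tangent direction `w` not parallel to `v₁ − v₃`. Then `q₁₀₁ ≠ 0`. -/
theorem transversal_coefficient_nonzero
    (v : Fin 3 → (Fin 2 → ℝ)) (hT : AffineIndependent ℝ v)
    (b : Fin 3 → MvPolynomial (Fin 2) ℝ)
    (hdeg : ∀ i, (b i).totalDegree ≤ 1)
    (hsum : ∑ i, b i = 1)
    (hbar : ∀ x : Fin 2 → ℝ, ∑ i, (MvPolynomial.eval x (b i)) • v i = x)
    (q : MvPolynomial (Fin 2) ℝ)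
    (q200 q110 q101 q011 : ℝ)
    (hq : q = MvPolynomial.C q200 * (b 0) ^ 2 +
      MvPolynomial.C q110 * (MvPolynomial.C 2 * b 0 * b 1) +
      MvPolynomial.C q101 * (MvPolynomial.C 2 * b 0 * b 2) +
      MvPolynomial.C q011 * (MvPolynomial.C 2 * b 1 * b 2))
    (e : Set (Fin 2 → ℝ))
    (he : e ⊆ {x | MvPolynomial.eval x q = 0})
    (hgrad : ∀ x ∈ e, (fun i => MvPolynomial.eval x (pderiv i q)) ≠ 0)
    (hv3 : v 2 ∈ e)
    (w : Fin 2 → ℝ)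
    (htan : ∑ i, w i * MvPolynomial.eval (v 2) (pderiv i q) = 0)
    (hw : LinearIndependent ℝ ![w, v 0 - v 2]) :
    q101 ≠ 0 := by
  -- barycentric values
  have bval : ∀ j i : Fin 3, eval (v j) (b i) = if i = j then 1 else 0 := by
    intro j
    have hs1 : ∑ i : Fin 3, eval (v j) (b i) = 1 := by
      have := congrArg (eval (v j)) hsum
      simpa using this
    have hs2 : ∑ i : Fin 3, (if i = j then (1:ℝ) else 0) = 1 := by simp
    have hcomb :
        Finset.univ.affineCombination ℝ v (fun i => eval (v j) (b i)) =
        Finset.univ.affineCombination ℝ v (fun i => if i = j then (1:ℝ) else 0) := by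
      rw [Finset.affineCombination_eq_linear_combination _ _ _ hs1,
        Finset.affineCombination_eq_linear_combination _ _ _ hs2]
      rw [hbar (v j)]
      simp
    have := (affineIndependent_iff_eq_of_fintype_affineCombination_eq ℝ v).mp hT
      _ _ hs1 hs2 hcomb
    intro i; exact congrFun this i
  set d : Fin 3 → Fin 2 → ℝ := fun k i => eval (v 2) (pderiv i (b k)) with hd
  -- gradient formula
  have hG : ∀ i : Fin 2, eval (v 2) (pderiv i q) = 2 * q101 * d 0 i + 2 * q011 * d 1 i := by
    intro i
    rw [hq]
    simp [pderiv_mul, pow_two, bval, hd]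
    ring
  -- directional derivatives along u = v 0 - v 2
  have hdir : ∀ k : Fin 3, ∑ i, (v 0 i - v 2 i) * d k i
      = eval (v 0) (b k) - eval (v 2) (b k) := by
    intro k
    have := affine_eval (b k) (hdeg k) (v 0) (v 2)
    rw [this]; simp only [hd]; ring
  have hd0 : ∑ i, (v 0 i - v 2 i) * d 0 i = 1 := by rw [hdir 0]; simp [bval]
  have hd1 : ∑ i, (v 0 i - v 2 i) * d 1 i = 0 := by rw [hdir 1]; simp [bval]
  -- determinant nonzero
  have hdet : w 0 * (v 0 - v 2) 1 - w 1 * (v 0 - v 2) 0 ≠ 0 := by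
    have : LinearIndependent ℝ (fun i => (Matrix.of ![w, v 0 - v 2]) i) := hw
    have hu := Matrix.linearIndependent_rows_iff_isUnit.mp this
    rw [Matrix.isUnit_iff_isUnit_det, isUnit_iff_ne_zero, Matrix.det_fin_two] at hu
    simpa [Matrix.of_apply] using hu
  intro hq101
  -- with q101 = 0, gradient = 2 q011 • d1
  have hG' : ∀ i, eval (v 2) (pderiv i q) = 2 * q011 * d 1 i := by
    intro i; rw [hG i, hq101]; ring
  have hne := hgrad (v 2) hv3
  have hq011 : q011 ≠ 0 := by
    intro h011
    apply hne
    funext i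
    rw [hG' i, h011]; simp
  have hwd : ∑ i, w i * d 1 i = 0 := by
    have : ∑ i, w i * (2 * q011 * d 1 i) = 0 := by
      rw [← htan]; exact Finset.sum_congr rfl (fun i _ => by rw [hG' i])
    have h2 : (2 * q011) * ∑ i, w i * d 1 i = 0 := by
      rw [Finset.mul_sum]; rw [← this]; exact Finset.sum_congr rfl (fun i _ => by ring)
    rcases mul_eq_zero.mp h2 with h | h
    · exfalso; simp [hq011] at h
    · exact h
  have hud : ∑ i, (v 0 i - v 2 i) * d 1 i = 0 := hd1
  -- solve 2x2 system
  rw [Fin.sum_univ_two] at hwd hud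
  have e0 : d 1 0 = 0 := by
    have h1 : w 0 * d 1 0 + w 1 * d 1 1 = 0 := hwd
    have h2' : (v 0 0 - v 2 0) * d 1 0 + (v 0 1 - v 2 1) * d 1 1 = 0 := hud
    have hD : w 0 * (v 0 1 - v 2 1) - w 1 * (v 0 0 - v 2 0) ≠ 0 := by
      simpa [Pi.sub_apply] using hdet
    have hz : (w 0 * (v 0 1 - v 2 1) - w 1 * (v 0 0 - v 2 0)) * d 1 0 = 0 := by
      linear_combination (v 0 1 - v 2 1) * h1 - w 1 * h2'
    exact (mul_eq_zero.mp hz).resolve_left hD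
  have e1 : d 1 1 = 0 := by
    have h1 : w 0 * d 1 0 + w 1 * d 1 1 = 0 := hwd
    have h2' : (v 0 0 - v 2 0) * d 1 0 + (v 0 1 - v 2 1) * d 1 1 = 0 := hud
    have hD : w 0 * (v 0 1 - v 2 1) - w 1 * (v 0 0 - v 2 0) ≠ 0 := by
      simpa [Pi.sub_apply] using hdet
    have hz : (w 0 * (v 0 1 - v 2 1) - w 1 * (v 0 0 - v 2 0)) * d 1 1 = 0 := by
      linear_combination w 0 * h2' - (v 0 0 - v 2 0) * h1
    exact (mul_eq_zero.mp hz).resolve_left hD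
  apply hne
  funext i
  rw [hG' i]
  fin_cases i <;> simp [e0, e1]
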